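/- Matroid exchange mapping: For any two independent sets C, I in a matroid M = (X, I), there exists an injective-on-its-nonzero-part mapping m : C \ I → (I \ C) ∪ {0} such that for each i ∈ C \ I, either m(i) = 0 and I + i is independent, or m(i) ∈ I \ C and I - m(i) + i is independent, and each element of I \ C is used as m(i) for at most one i. -/

import Mathlib

open Set

lemma indep_encard_le_of_subset_closure {α : Type*} {M : Matroid α} {J K : Set α}
    (hJ : M.Indep J) (hK : M.Indep K) (h : K ⊆ M.closure J) : K.encard ≤ J.encard := by
  obtain ⟨K', hK', hKK'⟩ := hK.subset_isBasis_of_subset h (M.closure_subset_ground J)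
  calc K.encard ≤ K'.encard := encard_le_encard hKK'
    _ = J.encard := hK'.encard_eq_encard hJ.isBasis_closure

lemma mem_closure_diff_of_forall {X : Type*} [Fintype X] {M : Matroid X} {I B : Set X} {i : X}
    (hI : M.Indep I) (hicl : i ∈ M.closure I)
    (h : ∀ j ∈ B, i ∈ M.closure (I \ {j})) : i ∈ M.closure (I \ B) := by
  classical
  set P : ℕ → Prop := fun n => ∃ J : Finset X, ↑J ⊆ I ∧ i ∈ M.closure ↑J ∧ J.card = n with hP
  have hPex : ∃ n, P n := ⟨_, I.toFinset, by simp, by rwa [Set.coe_toFinset], rfl⟩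
  obtain ⟨J, hJI, hJcl, hJcard⟩ := Nat.find_spec hPex
  have hmin : ∀ j ∈ J, i ∉ M.closure (↑(J.erase j) : Set X) := by
    intro j hj hcon
    have : P (J.erase j).card := ⟨J.erase j,
      (Finset.coe_subset.2 (Finset.erase_subset _ _)).trans hJI, hcon, rfl⟩
    have hlt : (J.erase j).card < Nat.find hPex := by
      rw [← hJcard]; exact Finset.card_erase_lt_of_mem hj
    exact Nat.find_min hPex hlt this
  have hJB : (↑J : Set X) ⊆ I \ B := by
    intro j hj
    refine ⟨hJI hj, fun hjB => ?_⟩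
    have hiIj : i ∈ M.closure (I \ {j}) := h j hjB
    have hecoe : (↑(J.erase j) : Set X) = ↑J \ {j} := by
      simp [Finset.coe_erase]
    have hie : i ∈ M.closure (insert j (↑J \ {j})) \ M.closure (↑J \ {j}) := by
      rw [Set.insert_diff_singleton, Set.insert_eq_of_mem hj]
      exact ⟨hJcl, by rw [← hecoe]; exact hmin j hj⟩
    have hex := Matroid.closure_exchange hie
    have hj2 : j ∈ M.closure (insert i (I \ {j})) := by
      refine M.closure_subset_closure ?_ hex.1
      exact insert_subset_insert (diff_subset_diff_left hJI)
    rw [Matroid.closure_insert_eq_of_mem_closure hiIj] at hj2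
    exact hI.notMem_closure_sdiff_of_mem (hJI hj) hj2
  exact M.closure_subset_closure hJB hJcl

/-- Matroid exchange mapping: for independent sets `C` and `I` in a matroid, there is a
mapping `m : C \ I → (I \ C) ∪ {0}` (here `0` is encoded by `none`) such that for each
`i ∈ C \ I` either `I + i` is independent (when `m i = none`), or `m i = some j` with
`j ∈ I \ C` and `I - j + i` independent; and each element of `I \ C` is used at most
once. -/
theorem matroid_exchange_mapping
    {X : Type*} [Fintype X] (M : Matroid X) (C I : Set X)
    (hC : M.Indep C) (hI : M.Indep I) :
    ∃ m : X → Option X,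
      (∀ i ∈ C \ I,
        (m i = none ∧ M.Indep (insert i I)) ∨
        (∃ j, m i = some j ∧ j ∈ I \ C ∧ M.Indep (insert i (I \ {j})))) ∧
      (∀ i₁ ∈ C \ I, ∀ i₂ ∈ C \ I, ∀ j : X,
        m i₁ = some j → m i₂ = some j → i₁ = i₂) := by
  classical
  set S : Set X := {i | i ∈ C \ I ∧ ¬ M.Indep (insert i I)} with hSdef
  have hSsub : S ⊆ C \ I := fun i hi => hi.1
  have hScl : ∀ i ∈ S, i ∈ M.closure I := by
    intro i hi
    rw [hI.mem_closure_iff_of_notMem hi.1.2]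
    exact ⟨hi.2, insert_subset (hC.subset_ground hi.1.1) hI.subset_ground⟩
  let t : S → Finset X := fun i =>
    (I \ C).toFinset.filter (fun j => M.Indep (insert (i : X) (I \ {j})))
  have htsub : ∀ i : S, ↑(t i) ⊆ I \ C := by
    intro i j hj
    simpa using (Finset.mem_filter.1 hj).1
  -- Hall's condition
  have hall : ∀ s : Finset S, s.card ≤ (s.biUnion t).card := by
    intro s
    set N : Finset X := s.biUnion t with hN
    set sA : Finset X := s.image Subtype.val with hsA
    have hsAS : ↑sA ⊆ S := by
      intro x hx
      obtain ⟨i, _, rfl⟩ := Finset.mem_image.1 (by exact_mod_cast hx)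
      exact i.2
    have hNsub : ↑N ⊆ I \ C := by
      intro j hj
      obtain ⟨i, _, hji⟩ := Finset.mem_biUnion.1 (by exact_mod_cast hj)
      exact htsub i hji
    -- every element of sA is in the closure of (I ∩ C) ∪ N
    have hclA : ∀ x ∈ (↑sA : Set X), x ∈ M.closure (I ∩ C ∪ ↑N) := by
      intro x hx
      obtain ⟨i, his, rfl⟩ := Finset.mem_image.1 (by exact_mod_cast hx)
      set B : Set X := (I \ C) \ ↑(t i) with hB
      have hstep : ∀ j ∈ B, (i : X) ∈ M.closure (I \ {j}) := by
        intro j hj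
        have hjnot : ¬ M.Indep (insert (i : X) (I \ {j})) := by
          intro hind
          exact hj.2 (Finset.mem_coe.2 (Finset.mem_filter.2 ⟨by simpa using hj.1, hind⟩))
        have hiI : (i : X) ∉ I \ ({j} : Set X) := fun hmem => i.2.1.2 hmem.1
        rw [(hI.subset diff_subset).mem_closure_iff_of_notMem hiI]
        exact ⟨hjnot, insert_subset (hC.subset_ground i.2.1.1)
          ((diff_subset.trans hI.subset_ground))⟩
      have hcl := mem_closure_diff_of_forall hI (hScl i i.2) hstep
      refine M.closure_subset_closure ?_ hcl
      intro x hx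
      by_cases hxC : x ∈ C
      · exact Or.inl ⟨hx.1, hxC⟩
      · have hxt : x ∈ t i := by
          by_contra hxt
          exact hx.2 ⟨⟨hx.1, hxC⟩, hxt⟩
        exact Or.inr (Finset.mem_coe.2 (Finset.mem_biUnion.2 ⟨i, his, hxt⟩))
    -- cardinality comparison
    have hK : M.Indep (↑sA ∪ (I ∩ C)) :=
      hC.subset (union_subset (fun x hx => ((hSsub (hsAS hx)).1)) inter_subset_right)
    have hJ' : M.Indep (I ∩ C ∪ ↑N) :=
      hI.subset (union_subset inter_subset_left (fun x hx => (hNsub hx).1))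
    have hKcl : (↑sA ∪ (I ∩ C)) ⊆ M.closure (I ∩ C ∪ ↑N) := by
      refine union_subset hclA ?_
      exact (subset_union_left).trans (M.subset_closure _ hJ'.subset_ground)
    have hle := indep_encard_le_of_subset_closure hJ' hK hKcl
    have hd1 : Disjoint (↑sA : Set X) (I ∩ C) := by
      refine disjoint_left.2 fun x hx hx2 => ?_
      exact (hSsub (hsAS hx)).2 hx2.1
    have hd2 : Disjoint (I ∩ C) (↑N : Set X) := by
      refine disjoint_left.2 fun x hx hx2 => (hNsub hx2).2 hx.2
    rw [encard_union_eq hd1, encard_union_eq hd2] at hle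
    rw [encard_coe_eq_coe_finsetCard, encard_coe_eq_coe_finsetCard] at hle
    have hICfin : (I ∩ C).encard ≠ ⊤ := (toFinite _).encard_lt_top.ne
    have : (sA.card : ℕ∞) ≤ N.card := by
      rw [add_comm ((I ∩ C).encard)] at hle
      exact (WithTop.add_le_add_iff_right hICfin).1 hle
    have hcard : sA.card ≤ N.card := by exact_mod_cast this
    rwa [hsA, Finset.card_image_of_injective s Subtype.val_injective] at hcard
  obtain ⟨f, hfinj, hf⟩ := (Finset.all_card_le_biUnion_card_iff_existsInjective' t).1 hall
  refine ⟨fun x => if h : x ∈ S then some (f ⟨x, h⟩) else none, ?_, ?_⟩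
  · intro i hi
    by_cases h : i ∈ S
    · right
      refine ⟨f ⟨i, h⟩, by simp [h], ?_, ?_⟩
      · have := htsub ⟨i, h⟩ (hf ⟨i, h⟩)
        exact this
      · exact (Finset.mem_filter.1 (hf ⟨i, h⟩)).2
    · left
      refine ⟨by simp [h], ?_⟩
      by_contra hind
      exact h ⟨hi, hind⟩
  · intro i₁ hi₁ i₂ hi₂ j hj₁ hj₂
    by_cases h₁ : i₁ ∈ S
    · by_cases h₂ : i₂ ∈ S
      · simp only [h₁, h₂, dif_pos, Option.some.injEq] at hj₁ hj₂
        have := hfinj (hj₁.trans hj₂.symm)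
        exact congrArg Subtype.val this
      · simp [h₂] at hj₂
    · simp [h₁] at hj₁
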